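/- Fix ℓ ≥ 0, and consider the two-arm instance with K=1: R_1(d) = 1 for all d ≥ 1, and R_2(d) = (2^ℓ + 1)·𝟙{d ≥ 2^ℓ + 1}. The schedule pulling arm 2 once every 2^ℓ+1 periods and arm 1 in all remaining periods achieves long-run average reward 2 - 1/(2^ℓ+1). Moreover, any 1-PPP with both periods d_1, d_2 in D_a ∪ {1, +∞} for some fixed a ≥ 1 has long-run average reward 1/d_1 + R_2(d_2)/d_2 ≤ 1 + 1/(2^ℓ+1). Hence as ℓ → ∞, the ratio of the best such PPP to the optimum tends to 1/2. -/

import Mathlib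

open Filter

/-- `D_a = {(2a-1)·2^m : m ≥ 0}`. -/
def Ds (a : ℕ) : Set ℕ := {d | ∃ m : ℕ, d = (2 * a - 1) * 2 ^ m}

/-- Tightness instance for the 1/2 worst-case ratio: with `R₁(d)=1` and
`R₂(d)=(2^ℓ+1)·𝟙{d ≥ 2^ℓ+1}`, (i) the schedule pulling arm 2 every `2^ℓ+1` periods
achieves average reward `2 - 1/(2^ℓ+1)`; (ii) any PPP with both periods in
`D_a ∪ {1}` (finite, at least 2) has average reward at most `1 + 1/(2^ℓ+1)`;
(iii) the resulting ratio tends to `1/2` as `ℓ → ∞`. -/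
theorem stmt14 (ℓ : ℕ) :
    (((2 : ℝ) ^ ℓ + 1 + 2 ^ ℓ) / (2 ^ ℓ + 1) = 2 - 1 / (2 ^ ℓ + 1)) ∧
    (∀ a : ℕ, 1 ≤ a → ∀ d₁ d₂ : ℕ,
      d₁ ∈ Ds a ∪ {1} → d₂ ∈ Ds a ∪ {1} → 2 ≤ d₁ → 2 ≤ d₂ →
      (1 : ℝ) / d₁ + (if 2 ^ ℓ + 1 ≤ d₂ then ((2 : ℝ) ^ ℓ + 1) / d₂ else 0) ≤
        1 + 1 / (2 ^ ℓ + 1)) ∧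
    Filter.Tendsto
      (fun ℓ' : ℕ => (1 + 1 / ((2 : ℝ) ^ ℓ' + 1)) / (2 - 1 / ((2 : ℝ) ^ ℓ' + 1)))
      Filter.atTop (nhds (1 / 2)) := by
  have hNpos : (0:ℝ) < 2 ^ ℓ + 1 := by positivity
  refine ⟨by field_simp; ring, ?_, ?_⟩
  · intro a ha d₁ d₂ h1 h2 hd1 hd2
    have hD1 : (0:ℝ) < (d₁:ℝ) := by exact_mod_cast Nat.lt_of_lt_of_le (by norm_num) hd1
    have hD2 : (0:ℝ) < (d₂:ℝ) := by exact_mod_cast Nat.lt_of_lt_of_le (by norm_num) hd2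
    have h11 : (1:ℝ)/d₁ ≤ 1/2 := by
      apply one_div_le_one_div_of_le (by norm_num)
      exact_mod_cast hd1
    by_cases hle : 2 ^ ℓ + 1 ≤ d₂
    · rw [if_pos hle]
      have hm1 : ∃ m : ℕ, d₁ = (2 * a - 1) * 2 ^ m := by
        rcases h1 with h | h
        · exact h
        · simp only [Set.mem_singleton_iff] at h; omega
      have hm2 : ∃ m : ℕ, d₂ = (2 * a - 1) * 2 ^ m := by
        rcases h2 with h | h
        · exact h
        · simp only [Set.mem_singleton_iff] at h; omega
      obtain ⟨m₁, e₁⟩ := hm1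
      obtain ⟨m₂, e₂⟩ := hm2
      set c := 2 * a - 1 with hc
      have hc1 : 1 ≤ c := by omega
      by_cases hm : m₂ ≤ ℓ
      · -- case A : the period of arm 2 is at most 2^ℓ (times odd part)
        have hcbig : 2 ^ (ℓ - m₂) < c := by
          by_contra hcon
          push_neg at hcon
          have : d₂ ≤ 2 ^ ℓ := by
            rw [e₂]
            calc c * 2 ^ m₂ ≤ 2 ^ (ℓ - m₂) * 2 ^ m₂ := Nat.mul_le_mul_right _ hcon
              _ = 2 ^ ℓ := by rw [← pow_add]; congr 1; omega
          omega
        have hA : 2 ^ ℓ + 2 ^ m₂ ≤ d₂ := by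
          rw [e₂]
          calc 2 ^ ℓ + 2 ^ m₂ = (2 ^ (ℓ - m₂) + 1) * 2 ^ m₂ := by
                rw [add_mul, one_mul, ← pow_add]; congr 2; omega
            _ ≤ c * 2 ^ m₂ := Nat.mul_le_mul_right _ hcbig
        have hB : 2 ^ ℓ + 2 ^ m₂ ≤ d₁ * 2 ^ m₂ := by
          rw [e₁]
          calc 2 ^ ℓ + 2 ^ m₂ = (2 ^ (ℓ - m₂) + 1) * 2 ^ m₂ := by
                rw [add_mul, one_mul, ← pow_add]; congr 2; omega
            _ ≤ c * 2 ^ m₂ := Nat.mul_le_mul_right _ hcbig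
            _ ≤ c * 2 ^ m₁ * 2 ^ m₂ := by
                apply Nat.mul_le_mul_right
                exact Nat.le_mul_of_pos_right _ (Nat.pow_pos (by norm_num))
        have hTpos : (0:ℝ) < 2 ^ ℓ + 2 ^ m₂ := by positivity
        have p1 : (1:ℝ)/d₁ ≤ 2 ^ m₂ / (2 ^ ℓ + 2 ^ m₂) := by
          rw [div_le_div_iff₀ hD1 hTpos]
          have : ((2:ℝ) ^ ℓ + 2 ^ m₂) ≤ d₁ * 2 ^ m₂ := by exact_mod_cast hB
          linarith
        have p2 : ((2:ℝ) ^ ℓ + 1) / d₂ ≤ ((2:ℝ) ^ ℓ + 1) / (2 ^ ℓ + 2 ^ m₂) := by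
          apply div_le_div_of_nonneg_left (le_of_lt hNpos) hTpos
          exact_mod_cast hA
        have key : (2:ℝ) ^ m₂ / (2 ^ ℓ + 2 ^ m₂) + ((2:ℝ) ^ ℓ + 1) / (2 ^ ℓ + 2 ^ m₂)
            = 1 + 1 / (2 ^ ℓ + 2 ^ m₂) := by
          field_simp
          ring
        have last : (1:ℝ) / (2 ^ ℓ + 2 ^ m₂) ≤ 1 / (2 ^ ℓ + 1) := by
          apply one_div_le_one_div_of_le hNpos
          have : (1:ℝ) ≤ 2 ^ m₂ := by exact_mod_cast Nat.one_le_two_pow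
          linarith
        linarith
      · -- case B : m₂ ≥ ℓ + 1
        push_neg at hm
        by_cases hcase : c = 1
        · have hA : 2 ^ (ℓ + 1) ≤ d₂ := by
            rw [e₂, hcase, one_mul]
            exact Nat.pow_le_pow_right (by norm_num) hm
          have hP : (0:ℝ) < 2 ^ (ℓ+1) := by positivity
          have p2 : ((2:ℝ) ^ ℓ + 1) / d₂ ≤ ((2:ℝ) ^ ℓ + 1) / 2 ^ (ℓ+1) := by
            apply div_le_div_of_nonneg_left (le_of_lt hNpos) hP
            exact_mod_cast hA
          have key : ((2:ℝ) ^ ℓ + 1) / 2 ^ (ℓ+1) = 1/2 + 1 / 2 ^ (ℓ+1) := by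
            rw [pow_succ]
            field_simp
          have last : (1:ℝ) / 2 ^ (ℓ+1) ≤ 1 / (2 ^ ℓ + 1) := by
            apply one_div_le_one_div_of_le hNpos
            rw [pow_succ]
            have : (1:ℝ) ≤ 2 ^ ℓ := by exact_mod_cast Nat.one_le_two_pow
            linarith
          linarith
        · have hc2 : 2 ≤ c := by omega
          have hA : 2 ^ (ℓ + 2) ≤ d₂ := by
            rw [e₂]
            calc 2 ^ (ℓ + 2) = 2 * 2 ^ (ℓ + 1) := by ring
              _ ≤ c * 2 ^ m₂ :=
                Nat.mul_le_mul hc2 (Nat.pow_le_pow_right (by norm_num) hm)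
          have hP : (0:ℝ) < 2 ^ (ℓ+2) := by positivity
          have p2 : ((2:ℝ) ^ ℓ + 1) / d₂ ≤ ((2:ℝ) ^ ℓ + 1) / 2 ^ (ℓ+2) := by
            apply div_le_div_of_nonneg_left (le_of_lt hNpos) hP
            exact_mod_cast hA
          have key : ((2:ℝ) ^ ℓ + 1) / 2 ^ (ℓ+2) ≤ 1/2 := by
            rw [div_le_div_iff₀ hP (by norm_num)]
            have : (2:ℝ) ^ (ℓ+2) = 4 * 2 ^ ℓ := by ring
            have h2 : (1:ℝ) ≤ 2 ^ ℓ := by exact_mod_cast Nat.one_le_two_pow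
            nlinarith
          have : (0:ℝ) ≤ 1 / (2 ^ ℓ + 1) := by positivity
          linarith
    · rw [if_neg hle]
      have : (0:ℝ) ≤ 1 / (2 ^ ℓ + 1) := by positivity
      linarith
  · have h0 : Tendsto (fun n : ℕ => ((2:ℝ) ^ n + 1)) atTop atTop :=
      Filter.tendsto_atTop_add_const_right atTop 1
        (tendsto_pow_atTop_atTop_of_one_lt one_lt_two)
    have hx : Tendsto (fun n : ℕ => 1 / ((2:ℝ) ^ n + 1)) atTop (nhds 0) := by
      simpa [one_div, Pi.inv_def] using h0.inv_tendsto_atTop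
    have h := (Filter.Tendsto.add (tendsto_const_nhds (x := (1:ℝ))) hx).div
      (Filter.Tendsto.sub (tendsto_const_nhds (x := (2:ℝ))) hx) (by norm_num)
    norm_num at h
    convert h using 2
    norm_num
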